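/- The class-II witness at θ = π, namely W_II(π) = W[0,1,1,1] (the witness of the reduction map), satisfies: (a) ⟨φ⊗(star∘φ), W[0,1,1,1](φ⊗(star∘φ))⟩ = 0 for every φ : Fin 4 → ℂ; and (b) the ℂ-linear span of {φ⊗(star∘φ) : φ : Fin 4 → ℂ} is all of ℂ¹⁶ (dimension 16), so W[0,1,1,1] has the spanning property. -/

import Mathlib

open Matrix Complex Real

/-- The tensor (product) vector `x ⊗ y` in `ℂ¹⁶`. -/
noncomputable def tensorVec (x y : Fin 4 → ℂ) : Fin 4 × Fin 4 → ℂ :=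
  fun p => x p.1 * y p.2

/-- The expectation `⟨v, W v⟩ = ∑ i, conj (v i) * (W *ᵥ v) i`. -/
noncomputable def expec (W : Matrix (Fin 4 × Fin 4) (Fin 4 × Fin 4) ℂ)
    (v : Fin 4 × Fin 4 → ℂ) : ℂ :=
  ∑ i, star (v i) * W.mulVec v i

/-- The Bell-diagonal matrix `W[a,b,c,d]` with `(α₀,α₁,α₂,α₃) = (a,b,c,d)`:
`W((k,m),(k',m')) = α_{(m−k) mod 4}` if `k=k', m=m'`; `−1` if `k=m, k'=m', k≠k'`;
`0` otherwise. -/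
noncomputable def Wabcd (a b c d : ℝ) : Matrix (Fin 4 × Fin 4) (Fin 4 × Fin 4) ℂ :=
  fun p q =>
    if p.1 = q.1 ∧ p.2 = q.2 then ((![a, b, c, d] (p.2 - p.1) : ℝ) : ℂ)
    else if p.1 = p.2 ∧ q.1 = q.2 ∧ p.1 ≠ q.1 then -1
    else 0

/-- The class-I witness `W_I(θ)`. -/
noncomputable def WI (θ : ℝ) : Matrix (Fin 4 × Fin 4) (Fin 4 × Fin 4) ℂ :=
  Wabcd ((2 - Real.sin θ) / 2) ((1 + Real.cos θ) / 2)
        (2 - (2 - Real.sin θ) / 2) (1 - (1 + Real.cos θ) / 2)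

/-- The class-II witness `W_II(θ)`. -/
noncomputable def WII (θ : ℝ) : Matrix (Fin 4 × Fin 4) (Fin 4 × Fin 4) ℂ :=
  Wabcd ((1 + Real.cos θ) / 2) ((2 - Real.sin θ) / 2)
        (1 - (1 + Real.cos θ) / 2) (2 - (2 - Real.sin θ) / 2)

/-- The maximally entangled vector `Ψ(j,j') = (−1)^{j+1}/2` if `j = j'`, else `0`. -/
noncomputable def PsiVec : Fin 4 × Fin 4 → ℂ :=
  fun p => if p.1 = p.2 then ((-1 : ℂ) ^ ((p.1 : ℕ) + 1)) / 2 else 0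

/-- The rank-one projector `P = |Ψ⟩⟨Ψ|`. -/
noncomputable def Pmat : Matrix (Fin 4 × Fin 4) (Fin 4 × Fin 4) ℂ :=
  fun u v => PsiVec u * star (PsiVec v)

set_option maxHeartbeats 2000000 in
theorem reduction_witness_spanning_property :
    (∀ φ : Fin 4 → ℂ, expec (Wabcd 0 1 1 1) (tensorVec φ (star ∘ φ)) = 0) ∧
    Submodule.span ℂ
      {v : Fin 4 × Fin 4 → ℂ | ∃ φ : Fin 4 → ℂ, v = tensorVec φ (star ∘ φ)} = ⊤ := by
  constructor
  · intro φ
    simp only [expec, Wabcd, tensorVec, mulVec, dotProduct, Fintype.sum_prod_type,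
    Fin.sum_univ_four, Function.comp_apply, star_mul', star_star]
    norm_num (config := { decide := true }) [Fin.ext_iff, show ((-1:Fin 4))=3 from rfl, show ((-2:Fin 4))=2 from rfl, show ((-3:Fin 4))=1 from rfl, Matrix.cons_val_one, Matrix.head_cons, Matrix.cons_val_zero, Matrix.cons_val_two, Matrix.tail_cons, Matrix.cons_val_three]
    simp only [show ((-1:Fin 4))=(3:Fin 4) by decide, show ((-2:Fin 4))=(2:Fin 4) by decide, show ((-3:Fin 4))=(1:Fin 4) by decide, Matrix.cons_val_one, Matrix.head_cons, Matrix.cons_val_zero, Matrix.cons_val_two, Matrix.tail_cons, Matrix.cons_val_three, Complex.ofReal_one]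
    simp only [show ((2:Fin 4) - 1) = 1 by decide, show ((1:Fin 4) - 2) = 3 by decide, show ((3:Fin 4) - 1) = 2 by decide, show ((1:Fin 4) - 3) = 2 by decide, show ((3:Fin 4) - 2) = 1 by decide, show ((2:Fin 4) - 3) = 3 by decide, Matrix.cons_val_zero, Matrix.cons_val_one, Matrix.cons_val_two, Matrix.cons_val_three, Matrix.head_cons, Matrix.tail_cons, Complex.ofReal_one]
    ring
  · set S := Submodule.span ℂ
        {v : Fin 4 × Fin 4 → ℂ | ∃ φ : Fin 4 → ℂ, v = tensorVec φ (star ∘ φ)} with hS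
    have hmem : ∀ φ : Fin 4 → ℂ, tensorVec φ (star ∘ φ) ∈ S := fun φ =>
      Submodule.subset_span ⟨φ, rfl⟩
    have key : ∀ p : Fin 4 × Fin 4,
        (fun q => if p = q then (1:ℂ) else 0) ∈ S := by
      rintro ⟨k, m⟩
      by_cases hkm : k = m
      · subst hkm
        have : (fun q : Fin 4 × Fin 4 => if (k, k) = q then (1:ℂ) else 0)
            = tensorVec (fun i => if i = k then 1 else 0)
                (star ∘ (fun i => if i = k then 1 else 0)) := by
          funext ⟨i, j⟩
          simp only [tensorVec, Function.comp_apply, Prod.mk.injEq, apply_ite, star_one, star_zero]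
          by_cases hik : i = k <;> by_cases hjk : j = k <;>
            simp_all [eq_comm]
        rw [this]; exact hmem _
      · set φ1 : Fin 4 → ℂ := fun i => (if i = k then 1 else 0) + (if i = m then 1 else 0) with hφ1
        set φ2 : Fin 4 → ℂ := fun i => (if i = k then 1 else 0) + (if i = m then I else 0) with hφ2
        set σk : Fin 4 → ℂ := fun i => if i = k then 1 else 0 with hσk
        set σm : Fin 4 → ℂ := fun i => if i = m then 1 else 0 with hσm
        have heq : (fun q : Fin 4 × Fin 4 => if (k, m) = q then (1:ℂ) else 0)
            = (1/2 : ℂ) • tensorVec φ1 (star ∘ φ1) + (I/2) • tensorVec φ2 (star ∘ φ2)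
              - ((1+I)/2) • tensorVec σk (star ∘ σk) - ((1+I)/2) • tensorVec σm (star ∘ σm) := by
          funext ⟨i, j⟩
          simp only [tensorVec, Function.comp_apply, Pi.add_apply, Pi.sub_apply, Pi.smul_apply,
            smul_eq_mul, hφ1, hφ2, hσk, hσm, Prod.mk.injEq, star_add, apply_ite, star_one,
            star_zero, Complex.star_def, Complex.conj_I]
          by_cases hik : i = k <;> by_cases him : i = m <;> by_cases hjk : j = k <;>
            by_cases hjm : j = m
          all_goals simp_all [eq_comm]
          all_goals (ring_nf; try simp [Complex.I_sq]; try ring)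
        rw [heq]
        exact sub_mem (sub_mem (add_mem (Submodule.smul_mem _ _ (hmem φ1))
          (Submodule.smul_mem _ _ (hmem φ2))) (Submodule.smul_mem _ _ (hmem σk)))
          (Submodule.smul_mem _ _ (hmem σm))
    rw [eq_top_iff]
    intro v _
    rw [show v = ∑ p : Fin 4 × Fin 4, v p • (fun q => if p = q then (1:ℂ) else 0) by
      funext q; simp [Finset.sum_apply, Finset.sum_ite_eq, if_pos (Finset.mem_univ q)]]
    exact Submodule.sum_mem _ fun p _ => Submodule.smul_mem _ _ (key p)
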